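/- Let W be a nonnegative random variable and γ > 0. Then L_W^{(γ)}(s,θ,σ) + Δ_θ L_W^{(γ)}(s,θ,σ) + Δ_σ L_W^{(γ)}(s,θ,σ) = (γ−1) Δ_θ Δ_σ L_W^{(γ)}(s,θ,σ), where Δ_θ and Δ_σ are the forward difference operators in θ and σ respectively. -/

import Mathlib

open MeasureTheory

/-- Hypergeometric-type Laplace transform `L_W^{(γ)}(s,θ,σ)`. -/
noncomputable def Lap {Ω : Type*} [MeasurableSpace Ω] (μ : Measure Ω)
    (W : Ω → ℝ) (γ s θ σ : ℝ) : ℝ :=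
  ∫ ω, (W ω / (1 + W ω)) ^ s * (γ * W ω / (1 + γ * W ω)) ^ θ *
    (1 / (1 + W ω)) ^ σ ∂μ

lemma key_id (γ s θ σ w : ℝ) (hγ : 0 < γ) (hw : 0 ≤ w) (hsθ : 0 ≤ s + θ) :
    (w/(1+w))^s * (γ*w/(1+γ*w))^(θ+1) * (1/(1+w))^σ
      + (w/(1+w))^s * (γ*w/(1+γ*w))^θ * (1/(1+w))^(σ+1)
      - (w/(1+w))^s * (γ*w/(1+γ*w))^θ * (1/(1+w))^σ
    = (γ-1) * ((w/(1+w))^s * (γ*w/(1+γ*w))^(θ+1) * (1/(1+w))^(σ+1)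
      - (w/(1+w))^s * (γ*w/(1+γ*w))^(θ+1) * (1/(1+w))^σ
      - (w/(1+w))^s * (γ*w/(1+γ*w))^θ * (1/(1+w))^(σ+1)
      + (w/(1+w))^s * (γ*w/(1+γ*w))^θ * (1/(1+w))^σ) := by
  rcases eq_or_lt_of_le hw with h0 | h0
  · subst h0
    simp only [mul_zero, zero_div, div_zero]
    norm_num
    rcases eq_or_ne s 0 with hs | hs
    · subst hs
      have hθ : 0 ≤ θ := by linarith
      rcases eq_or_ne θ 0 with ht | ht
      · subst ht
        norm_num [Real.zero_rpow]
      · have hθ1 : θ + 1 ≠ 0 := by positivity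
        simp [Real.zero_rpow ht, Real.zero_rpow hθ1]
    · simp [Real.zero_rpow hs]
  · have h1 : (0:ℝ) < 1 + w := by linarith
    have h2 : (0:ℝ) < 1 + γ * w := by nlinarith
    have hB : (0:ℝ) < γ * w / (1 + γ * w) := by positivity
    have hC : (0:ℝ) < 1 / (1 + w) := by positivity
    rw [Real.rpow_add_one hB.ne', Real.rpow_add_one hC.ne']
    field_simp
    ring

lemma bound_aux (γ s θ σ w : ℝ) (hγ : 0 < γ) (hw : 0 ≤ w) (hsθ : 0 ≤ s + θ)
    (hσ : 0 ≤ σ) :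
    |(w/(1+w))^s * (γ*w/(1+γ*w))^θ * (1/(1+w))^σ|
      ≤ Real.exp (|θ| * |Real.log γ|) := by
  have h1 : (0:ℝ) < 1 + w := by linarith
  have hA0 : (0:ℝ) ≤ w / (1 + w) := by positivity
  have hC0 : (0:ℝ) ≤ 1 / (1 + w) := by positivity
  have hC1 : 1 / (1 + w) ≤ 1 := by
    rw [div_le_one h1]; linarith
  have hCσ : (1/(1+w))^σ ≤ 1 := Real.rpow_le_one hC0 hC1 hσ
  have hE1 : (1:ℝ) ≤ Real.exp (|θ| * |Real.log γ|) := by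
    rw [Real.one_le_exp_iff]; positivity
  have h2 : (0:ℝ) < 1 + γ * w := by nlinarith
  have hB0 : (0:ℝ) ≤ γ * w / (1 + γ * w) := by positivity
  rw [abs_of_nonneg (by positivity)]
  rcases eq_or_lt_of_le hw with h0 | h0
  · subst h0
    norm_num
    calc (0:ℝ)^s * (0:ℝ)^θ ≤ 1 * 1 := by
          gcongr <;> exact Real.zero_rpow_le_one _
      _ ≤ _ := by linarith
  · have hA : (0:ℝ) < w / (1 + w) := by positivity
    have hA1 : w / (1 + w) ≤ 1 := by rw [div_le_one h1]; linarith
    set r : ℝ := γ * (1 + w) / (1 + γ * w) with hr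
    have hrpos : (0:ℝ) < r := by positivity
    have hBfac : γ * w / (1 + γ * w) = (w / (1 + w)) * r := by
      field_simp [hr]
      have hrm : r * (1 + γ * w) = γ * (1 + w) := by rw [hr]; exact div_mul_cancel₀ _ h2.ne'
      linear_combination -hrm
    have hlogr : |Real.log r| ≤ |Real.log γ| := by
      rcases le_total γ 1 with hγ1 | hγ1
      · have hrle : r ≤ 1 := by
          rw [div_le_one h2]
          nlinarith [mul_nonneg (mul_nonneg (sub_nonneg.mpr hγ1) hγ.le) hw]
        have hrge : γ ≤ r := by
          rw [le_div_iff₀ h2]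
          nlinarith [mul_nonneg (mul_nonneg (sub_nonneg.mpr hγ1) hγ.le) hw]
        have l1 : Real.log r ≤ 0 := Real.log_nonpos hrpos.le hrle
        have l2 : Real.log γ ≤ Real.log r := Real.log_le_log hγ hrge
        have l3 : Real.log γ ≤ 0 := Real.log_nonpos hγ.le hγ1
        rw [abs_of_nonpos l1, abs_of_nonpos l3]; linarith
      · have hrge : 1 ≤ r := by
          rw [le_div_iff₀ h2]
          nlinarith [mul_nonneg (mul_nonneg (sub_nonneg.mpr hγ1) hγ.le) hw]
        have hrle : r ≤ γ := by
          rw [div_le_iff₀ h2]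
          nlinarith [mul_nonneg (mul_nonneg (sub_nonneg.mpr hγ1) hγ.le) hw]
        have l1 : 0 ≤ Real.log r := Real.log_nonneg hrge
        have l2 : Real.log r ≤ Real.log γ := Real.log_le_log hrpos hrle
        rw [abs_of_nonneg l1, abs_of_nonneg (by linarith)]; linarith
    have hrθ : r ^ θ ≤ Real.exp (|θ| * |Real.log γ|) := by
      rw [Real.rpow_def_of_pos hrpos]
      apply Real.exp_le_exp.mpr
      calc Real.log r * θ ≤ |Real.log r * θ| := le_abs_self _
        _ = |θ| * |Real.log r| := by rw [abs_mul, mul_comm]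
        _ ≤ |θ| * |Real.log γ| := by gcongr
    calc (w/(1+w))^s * (γ*w/(1+γ*w))^θ * (1/(1+w))^σ
        ≤ (w/(1+w))^s * (γ*w/(1+γ*w))^θ * 1 := by
          exact mul_le_mul_of_nonneg_left hCσ (by positivity)
      _ = (w/(1+w))^(s+θ) * r^θ := by
          rw [hBfac, Real.mul_rpow hA0 hrpos.le, Real.rpow_add hA]; ring
      _ ≤ 1 * Real.exp (|θ| * |Real.log γ|) :=
          mul_le_mul (Real.rpow_le_one hA0 hA1 hsθ) hrθ
            (Real.rpow_nonneg hrpos.le _) one_pos.le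
      _ = _ := one_mul _

lemma integrable_aux {Ω : Type*} [MeasurableSpace Ω] (μ : Measure Ω)
    [IsProbabilityMeasure μ] (W : Ω → ℝ) (hW : Measurable W)
    (hWpos : ∀ ω, 0 ≤ W ω) (γ : ℝ) (hγ : 0 < γ)
    (s θ σ : ℝ) (hsθ : 0 ≤ s + θ) (hσ : 0 ≤ σ) :
    Integrable (fun ω => (W ω / (1 + W ω)) ^ s * (γ * W ω / (1 + γ * W ω)) ^ θ *
      (1 / (1 + W ω)) ^ σ) μ := by
  have hmeas : Measurable (fun ω => (W ω / (1 + W ω)) ^ s *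
      (γ * W ω / (1 + γ * W ω)) ^ θ * (1 / (1 + W ω)) ^ σ) := by
    fun_prop
  exact (integrable_const (Real.exp (|θ| * |Real.log γ|))).mono'
    hmeas.aestronglyMeasurable
    (Filter.Eventually.of_forall fun ω =>
      bound_aux γ s θ σ (W ω) hγ (hWpos ω) hsθ hσ)

theorem stmt7 {Ω : Type*} [MeasurableSpace Ω] (μ : Measure Ω)
    [IsProbabilityMeasure μ] (W : Ω → ℝ) (hW : Measurable W)
    (hWpos : ∀ ω, 0 ≤ W ω) (γ : ℝ) (hγ : 0 < γ)
    (s θ σ : ℝ) (hsθ : 0 ≤ s + θ) (hσ : 0 ≤ σ) :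
    Lap μ W γ s θ σ + (Lap μ W γ s (θ + 1) σ - Lap μ W γ s θ σ) +
        (Lap μ W γ s θ (σ + 1) - Lap μ W γ s θ σ) =
      (γ - 1) * ((Lap μ W γ s (θ + 1) (σ + 1) - Lap μ W γ s (θ + 1) σ) -
        (Lap μ W γ s θ (σ + 1) - Lap μ W γ s θ σ)) := by
  set f : ℝ → ℝ → Ω → ℝ := fun θ' σ' ω =>
    (W ω / (1 + W ω)) ^ s * (γ * W ω / (1 + γ * W ω)) ^ θ' *
      (1 / (1 + W ω)) ^ σ' with hf
  have I1 : Integrable (f θ σ) μ := integrable_aux μ W hW hWpos γ hγ s θ σ hsθ hσ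
  have I2 : Integrable (f (θ+1) σ) μ :=
    integrable_aux μ W hW hWpos γ hγ s (θ+1) σ (by linarith) hσ
  have I3 : Integrable (f θ (σ+1)) μ :=
    integrable_aux μ W hW hWpos γ hγ s θ (σ+1) hsθ (by linarith)
  have I4 : Integrable (f (θ+1) (σ+1)) μ :=
    integrable_aux μ W hW hWpos γ hγ s (θ+1) (σ+1) (by linarith) (by linarith)
  have hfun : (fun ω => f (θ+1) σ ω + f θ (σ+1) ω - f θ σ ω)
      = fun ω => (γ-1) * (f (θ+1) (σ+1) ω - f (θ+1) σ ω - f θ (σ+1) ω + f θ σ ω) :=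
    funext fun ω => key_id γ s θ σ (W ω) hγ (hWpos ω) hsθ
  have e1 : ∫ ω, (f (θ+1) σ ω + f θ (σ+1) ω - f θ σ ω) ∂μ
      = ∫ ω, f (θ+1) σ ω ∂μ + ∫ ω, f θ (σ+1) ω ∂μ - ∫ ω, f θ σ ω ∂μ := by
    have hB : ∫ ω, (f (θ+1) σ ω + f θ (σ+1) ω - f θ σ ω) ∂μ
        = ∫ ω, (f (θ+1) σ ω + f θ (σ+1) ω) ∂μ - ∫ ω, f θ σ ω ∂μ :=
      integral_sub (I2.add I3) I1
    have hA : ∫ ω, (f (θ+1) σ ω + f θ (σ+1) ω) ∂μ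
        = ∫ ω, f (θ+1) σ ω ∂μ + ∫ ω, f θ (σ+1) ω ∂μ := integral_add I2 I3
    rw [hB, hA]
  have e2 : ∫ ω, (γ-1) * (f (θ+1) (σ+1) ω - f (θ+1) σ ω - f θ (σ+1) ω + f θ σ ω) ∂μ
      = (γ-1) * (∫ ω, f (θ+1) (σ+1) ω ∂μ - ∫ ω, f (θ+1) σ ω ∂μ
        - ∫ ω, f θ (σ+1) ω ∂μ + ∫ ω, f θ σ ω ∂μ) := by
    have hB : ∫ ω, (f (θ+1) (σ+1) ω - f (θ+1) σ ω - f θ (σ+1) ω + f θ σ ω) ∂μ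
        = ∫ ω, (f (θ+1) (σ+1) ω - f (θ+1) σ ω - f θ (σ+1) ω) ∂μ + ∫ ω, f θ σ ω ∂μ :=
      integral_add ((I4.sub I2).sub I3) I1
    have hC : ∫ ω, (f (θ+1) (σ+1) ω - f (θ+1) σ ω - f θ (σ+1) ω) ∂μ
        = ∫ ω, (f (θ+1) (σ+1) ω - f (θ+1) σ ω) ∂μ - ∫ ω, f θ (σ+1) ω ∂μ :=
      integral_sub (I4.sub I2) I3
    have hD : ∫ ω, (f (θ+1) (σ+1) ω - f (θ+1) σ ω) ∂μ
        = ∫ ω, f (θ+1) (σ+1) ω ∂μ - ∫ ω, f (θ+1) σ ω ∂μ := integral_sub I4 I2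
    rw [integral_const_mul, hB, hC, hD]
  have h : ∫ ω, f (θ+1) σ ω ∂μ + ∫ ω, f θ (σ+1) ω ∂μ - ∫ ω, f θ σ ω ∂μ
      = (γ-1) * (∫ ω, f (θ+1) (σ+1) ω ∂μ - ∫ ω, f (θ+1) σ ω ∂μ
        - ∫ ω, f θ (σ+1) ω ∂μ + ∫ ω, f θ σ ω ∂μ) := by
    rw [← e1, ← e2, hfun]
  have hL : ∀ θ' σ', Lap μ W γ s θ' σ' = ∫ ω, f θ' σ' ω ∂μ := fun _ _ => rfl
  rw [hL, hL, hL, hL]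
  linear_combination h
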